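/- Let S be a densely defined, closed, symmetric operator in a complex Hilbert space H with S ≥ εI for some ε > 0, and let S_F and S_K denote its Friedrichs and Krein–von Neumann extensions. Then S_F and S_K are relatively prime, i.e., dom(S_F) ∩ dom(S_K) = dom(S). -/

import Mathlib

open scoped ComplexInnerProductSpace
open Filter

noncomputable section

variable {H : Type*} [NormedAddCommGroup H] [InnerProductSpace ℂ H] [CompleteSpace H]

/-- The kernel of the adjoint `S*` of a densely defined operator `S`,
described as `{v | ∀ u ∈ dom S, ⟪S u, v⟫ = 0}`. -/
def adjKerD (S : H →ₗ.[ℂ] H) : Submodule ℂ H where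
  carrier := {v | ∀ u : S.domain, ⟪S u, v⟫ = 0}
  add_mem' := by
    intro a b ha hb u
    rw [inner_add_right, ha u, hb u, add_zero]
  zero_mem' := by
    intro u; exact inner_zero_right _
  smul_mem' := by
    intro c a ha u
    rw [inner_smul_right, ha u, mul_zero]

/-- Lemma 2.8: If `S` is densely defined, closed, symmetric with
`S ≥ ε·I` for some `ε > 0`, and `S_F`, `S_K` are its Friedrichs and Krein–von Neumann
extensions (nonnegative self-adjoint extensions, restrictions of `S*`, with
`dom S_K = dom S ∔ ker S*` and `S_F ≥ ε·I`), then `S_F` and `S_K` are relatively prime: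
`dom S_F ∩ dom S_K = dom S`. -/
theorem stmt_0 (S S_F S_K : H →ₗ.[ℂ] H)
    (hdense : Dense (S.domain : Set H))
    (hclosed : S.IsClosed)
    (hsym : ∀ u v : S.domain, ⟪S u, (v : H)⟫ = ⟪(u : H), S v⟫)
    (ε : ℝ) (hε : 0 < ε)
    (hbound : ∀ u : S.domain, ε * ‖(u : H)‖ ^ 2 ≤ (⟪(u : H), S u⟫).re)
    (hFext : S ≤ S_F) (hKext : S ≤ S_K)
    -- `S_F ⊆ S*` and `S_K ⊆ S*` (both are self-adjoint restrictions of the adjoint):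
    (hFadj : ∀ (v : S_F.domain) (u : S.domain), ⟪S u, (v : H)⟫ = ⟪(u : H), S_F v⟫)
    (hKadj : ∀ (v : S_K.domain) (u : S.domain), ⟪S u, (v : H)⟫ = ⟪(u : H), S_K v⟫)
    -- `S_F ≥ ε·I`:
    (hFbound : ∀ v : S_F.domain, ε * ‖(v : H)‖ ^ 2 ≤ (⟪(v : H), S_F v⟫).re)
    -- Krein's domain formula `dom S_K = dom S ∔ ker S*`:
    (hdomK : S_K.domain = S.domain ⊔ adjKerD S) :
    S_F.domain ⊓ S_K.domain = S.domain := by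
  apply le_antisymm
  · intro v hv
    obtain ⟨hvF, hvK⟩ := hv
    have hvK' : v ∈ S.domain ⊔ adjKerD S := hdomK ▸ hvK
    obtain ⟨u, hu, w, hw, huw⟩ := Submodule.mem_sup.mp hvK'
    have hwF : w ∈ S_F.domain := by
      have : w = v - u := by rw [← huw]; abel
      rw [this]
      exact Submodule.sub_mem _ hvF (hFext.1 hu)
    set W : S_F.domain := ⟨w, hwF⟩
    have hSFw : S_F W = 0 := by
      apply hdense.eq_zero_of_inner_right (𝕜 := ℂ)
      intro u' hu'
      exact (hFadj W ⟨u', hu'⟩).symm.trans (hw ⟨u', hu'⟩)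
    have hb := hFbound W
    rw [hSFw, inner_zero_right] at hb
    simp only [Complex.zero_re] at hb
    have hw0 : w = 0 := by
      by_contra h0
      have : 0 < ε * ‖w‖ ^ 2 := mul_pos hε (pow_pos (norm_pos_iff.mpr h0) 2)
      exact absurd (lt_of_lt_of_le this hb) (lt_irrefl 0)
    rw [← huw, hw0, add_zero]
    exact hu
  · intro v hv
    exact ⟨hFext.1 hv, hKext.1 hv⟩
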